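/- Let S be a string of length n ≥ 2 whose last character $ = S[n] occurs at no other position of S. Suppose S[1..n−1] has at least one nonempty suffix that occurs at least twice in S, and let w be the longest such suffix. Then |w| ≤ n − 2, and, letting α = S[n−1−|w|] (so that αw is a suffix of S[1..n−1]), we have occ_S(αw) = 1 and (α, $) ∈ Φ_S(w). -/

import Mathlib

variable {Γ : Type*} [DecidableEq Γ]

/-- `occ S w` is the number of occurrences of `w` as a contiguous substring of `S`,
i.e., the number of (0-based) indices `i` with `S[i..i+|w|-1] = w`. -/
def occ (S w : List Γ) : ℕ :=
  ((List.range S.length).filter fun i => (S.drop i).take w.length = w).length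

/-- `Phi S w` is the set of pairs `(α, β)` of characters such that
`occ S (αwβ) = occ S (αw) = occ S (wβ) = 1`. -/
def Phi (S w : List Γ) : Set (Γ × Γ) :=
  {p | occ S (p.1 :: (w ++ [p.2])) = 1 ∧ occ S (p.1 :: w) = 1 ∧ occ S (w ++ [p.2]) = 1}

/-- The net frequency of `w` in `S`. -/
noncomputable def phi (S w : List Γ) : ℕ := (Phi S w).ncard

set_option linter.unusedSectionVars false

lemma occ_eq_card (S u : List Γ) :
    occ S u = ((Finset.range S.length).filter
      (fun i => (S.drop i).take u.length = u)).card := rfl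

lemma occ_pos (S u : List Γ) (hu : u ≠ []) (h : u <:+: S) : 1 ≤ occ S u := by
  obtain ⟨a, b, rfl⟩ := h
  rw [occ_eq_card, Nat.one_le_iff_ne_zero, ← Nat.pos_iff_ne_zero, Finset.card_pos]
  refine ⟨a.length, Finset.mem_filter.2 ⟨Finset.mem_range.2 ?_, ?_⟩⟩
  · simp only [List.length_append]
    have : 1 ≤ u.length := List.length_pos_iff.2 hu
    omega
  · simp only [List.append_assoc, List.drop_left, List.take_left]

lemma occ_le_one (S u : List Γ) (i0 : ℕ)
    (h : ∀ i, i < S.length → (S.drop i).take u.length = u → i = i0) : occ S u ≤ 1 := by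
  rw [occ_eq_card]
  refine Finset.card_le_one.2 fun a ha b hb => ?_
  simp only [Finset.mem_filter, Finset.mem_range] at ha hb
  rw [h a ha.1 ha.2, h b hb.1 hb.2]

lemma match_bound {S u : List Γ} (hu : u ≠ []) {i : ℕ}
    (h : (S.drop i).take u.length = u) : i + u.length ≤ S.length := by
  have h1 := congrArg List.length h
  simp only [List.length_take, List.length_drop] at h1
  have h2 : u.length ≤ S.length - i := by rw [← h1]; exact min_le_right _ _
  have h3 : 0 < u.length := List.length_pos_iff.2 hu
  omega

lemma match_get {S u : List Γ} {i j : ℕ} (h : (S.drop i).take u.length = u)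
    (hj : j < u.length) (hij : i + j < S.length) : S[i+j] = u[j] := by
  rw [List.getElem_of_eq h.symm hj, List.getElem_take, List.getElem_drop]

lemma c_pos {S T : List Γ} {c : Γ} (hS : S = T ++ [c]) (hc : c ∉ T) {k : ℕ}
    (hk : k < S.length) (h : S[k] = c) : k = T.length := by
  subst hS
  simp only [List.length_append, List.length_singleton] at hk
  by_contra hne
  have hkT : k < T.length := by omega
  rw [List.getElem_append_left hkT] at h
  exact hc (h ▸ List.getElem_mem hkT)

/-- Let `S = T ++ [c]` where the last character `c` occurs at no other
position of `S` (i.e. `c ∉ T`), with `|S| ≥ 2`. If `w` is the longest nonempty suffix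
of `T = S[1..n-1]` occurring at least twice in `S`, then `|w| ≤ n - 2` and, for the
character `α` with `αw` a suffix of `T` (i.e. `α = S[n-1-|w|]`), we have
`occ S (αw) = 1` and `(α, c) ∈ Phi S w`. -/
theorem stmt6 (S T : List Γ) (c : Γ) (hS : S = T ++ [c]) (hc : c ∉ T)
    (hn : 2 ≤ S.length)
    (w : List Γ) (hw : w ≠ []) (hsuf : w <:+ T) (hocc : 2 ≤ occ S w)
    (hlong : ∀ w' : List Γ, w' ≠ [] → w' <:+ T → 2 ≤ occ S w' → w'.length ≤ w.length) :
    w.length ≤ S.length - 2 ∧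
    ∃ α : Γ, (α :: w) <:+ T ∧ occ S (α :: w) = 1 ∧ (α, c) ∈ Phi S w := by
  subst hS
  have hT1 : 1 ≤ T.length := by simp at hn; omega
  have hwpos : 0 < w.length := List.length_pos_iff.2 hw
  have hwlt : w.length < T.length := by
    by_contra hcon
    push_neg at hcon
    have hwe : w = T := hsuf.eq_of_length (le_antisymm hsuf.length_le hcon)
    subst hwe
    have hle : occ (w ++ [c]) w ≤ 1 := by
      apply occ_le_one _ _ 0
      intro i hi hp
      by_contra hne
      have hb := match_bound hw hp
      simp only [List.length_append, List.length_singleton] at hb hi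
      have hi1 : i = 1 := by omega
      subst hi1
      have hj : w.length - 1 < w.length := by omega
      have hij : 1 + (w.length - 1) < (w ++ [c]).length := by simp; omega
      have hg := match_get hp hj hij
      have hcc : (w ++ [c])[1 + (w.length - 1)]'hij = c :=
        List.getElem_concat_length (by omega) hij
      rw [hcc] at hg
      exact hc (hg ▸ List.getElem_mem hj)
    omega
  refine ⟨by simp; omega, ?_⟩
  obtain ⟨t', ht'⟩ := hsuf
  have ht'len : t'.length = T.length - w.length := by
    have := congrArg List.length ht'; simp at this; omega
  have ht'ne : t' ≠ [] := by
    intro h; rw [h] at ht'len; simp at ht'len; omega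
  obtain ⟨t, α, rfl⟩ := t'.eq_nil_or_concat.resolve_left ht'ne
  rw [List.concat_eq_append] at ht' ht'len
  have hsufα : α :: w <:+ T := ⟨t, by rw [← ht']; simp⟩
  have hcw : c ∉ w := by
    intro hm; exact hc (by rw [← ht']; simp [hm])
  -- occ (α :: w) = 1
  have e1 : occ (T ++ [c]) (α :: w) = 1 := by
    refine le_antisymm ?_ (occ_pos _ _ (by simp) ⟨t, [c], by rw [← ht']; simp⟩)
    by_contra h
    have h2 : 2 ≤ occ (T ++ [c]) (α :: w) := by omega
    have := hlong _ (by simp) hsufα h2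
    simp at this
  -- occ (w ++ [c]) = 1
  have e2 : occ (T ++ [c]) (w ++ [c]) = 1 := by
    refine le_antisymm ?_ (occ_pos _ _ (by simp) ⟨t ++ [α], [], by rw [← ht']; simp⟩)
    apply occ_le_one _ _ (T.length - w.length)
    intro i hi hp
    have hb := match_bound (by simp : w ++ [c] ≠ []) hp
    simp only [List.length_append, List.length_singleton] at hb hi
    have hj : w.length < (w ++ [c]).length := by simp
    have hij : i + w.length < (T ++ [c]).length := by simp; omega
    have hg := match_get hp hj hij
    have hcc : (w ++ [c])[w.length]'(by simp) = c :=
      List.getElem_concat_length rfl _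
    rw [hcc] at hg
    have := c_pos rfl hc hij hg
    omega
  -- occ (α :: (w ++ [c])) = 1
  have hform : α :: (w ++ [c]) = (α :: w) ++ [c] := rfl
  have e3 : occ (T ++ [c]) (α :: (w ++ [c])) = 1 := by
    refine le_antisymm ?_ (occ_pos _ _ (by simp) ⟨t, [], by rw [← ht']; simp⟩)
    apply occ_le_one _ _ (T.length - w.length - 1)
    intro i hi hp
    have hb := match_bound (by simp : α :: (w ++ [c]) ≠ []) hp
    simp only [List.length_cons, List.length_append, List.length_singleton] at hb hi
    have hj : w.length + 1 < (α :: (w ++ [c])).length := by simp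
    have hij : i + (w.length + 1) < (T ++ [c]).length := by simp; omega
    have hg := match_get hp hj hij
    have hcc : (α :: (w ++ [c]))[w.length + 1]'hj = c := by
      rw [List.getElem_of_eq hform]
      exact List.getElem_concat_length (by simp) _
    rw [hcc] at hg
    have := c_pos rfl hc hij hg
    omega
  exact ⟨α, hsufα, e1, e3, e1, e2⟩
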